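/- Let p be a prime and B ⊆ F_p^2 a set meeting every affine line of F_p^2. Then |B| ≥ 2p - 1. -/
import Mathlib

open MvPolynomial Finset

/-- Key lemma: a polynomial on `F_p^2` vanishing at every nonzero point but not at `0`
has total degree at least `2(p-1)`. -/
lemma jbs_key {p : ℕ} [Fact p.Prime] (F : MvPolynomial (Fin 2) (ZMod p))
    (h0 : eval (0 : Fin 2 → ZMod p) F ≠ 0)
    (hvan : ∀ x : Fin 2 → ZMod p, x ≠ 0 → eval x F = 0) :
    2 * (p - 1) ≤ F.totalDegree := by
  by_contra h
  push_neg at h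
  have hp2 : 2 ≤ p := (Fact.out : p.Prime).two_le
  have hsum : ∑ x : Fin 2 → ZMod p, eval x F = 0 := by
    apply MvPolynomial.sum_eval_eq_zero
    rw [ZMod.card, Fintype.card_fin]
    omega
  have hsum' : ∑ x : Fin 2 → ZMod p, eval x F = eval 0 F :=
    Fintype.sum_eq_single (0 : Fin 2 → ZMod p) (fun x hx => hvan x hx)
  exact h0 (hsum'.symm.trans hsum)

/-- Jamison–Brouwer–Schrijver: an affine blocking set in `F_p^2` has at least `2p-1` points. -/
theorem jamison_brouwer_schrijver (p : ℕ) (hp : p.Prime)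
    (B : Set (ZMod p × ZMod p))
    (hB : ∀ a v : ZMod p × ZMod p, v ≠ 0 →
      ∃ x ∈ B, ∃ t : ZMod p, x = a + t • v) :
    2 * p - 1 ≤ B.ncard := by
  classical
  haveI := Fact.mk hp
  have hp2 : 2 ≤ p := hp.two_le
  have h10 : ((1, 0) : ZMod p × ZMod p) ≠ 0 := by
    simp [Prod.ext_iff]
  obtain ⟨b₀, hb₀, -⟩ := hB 0 (1, 0) h10
  have hBfin : B.Finite := Set.toFinite B
  set Bf : Finset (ZMod p × ZMod p) := hBfin.toFinset with hBf
  have hb₀f : b₀ ∈ Bf := hBfin.mem_toFinset.mpr hb₀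
  set D : Finset (ZMod p × ZMod p) := Bf.image (fun x => x - b₀) with hDdef
  have hDcard : D.card = Bf.card :=
    Finset.card_image_of_injective _ (sub_left_injective)
  have h0D : (0 : ZMod p × ZMod p) ∈ D :=
    Finset.mem_image.mpr ⟨b₀, hb₀f, sub_self b₀⟩
  set D' : Finset (ZMod p × ZMod p) := D.erase 0 with hD'def
  have hD'card : D'.card = D.card - 1 := Finset.card_erase_of_mem h0D
  -- every "affine" line {u : a₁ u₁ + a₂ u₂ = 1} meets D'
  have hblock : ∀ a : ZMod p × ZMod p, a ≠ 0 →
      ∃ c ∈ D', a.1 * c.1 + a.2 * c.2 = 1 := by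
    intro a ha
    obtain ⟨u₀, hu₀⟩ : ∃ u₀ : ZMod p × ZMod p, a.1 * u₀.1 + a.2 * u₀.2 = 1 := by
      by_cases h1 : a.1 = 0
      · have h2 : a.2 ≠ 0 := fun h2 => ha (Prod.ext h1 h2)
        exact ⟨(0, a.2⁻¹), by simp [mul_inv_cancel₀ h2]⟩
      · exact ⟨(a.1⁻¹, 0), by simp [mul_inv_cancel₀ h1]⟩
    have hv : ((-a.2, a.1) : ZMod p × ZMod p) ≠ 0 := by
      intro hv0
      apply ha
      have h1 := congrArg Prod.fst hv0
      have h2 := congrArg Prod.snd hv0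
      simp at h1 h2
      exact Prod.ext h2 h1
    obtain ⟨x, hx, t, hxt⟩ := hB (u₀ + b₀) (-a.2, a.1) hv
    have h1 : (x - b₀).1 = u₀.1 + t * (-a.2) := by
      rw [hxt]; simp [Prod.fst_add, Prod.fst_sub]; ring
    have h2 : (x - b₀).2 = u₀.2 + t * a.1 := by
      rw [hxt]; simp [Prod.snd_add, Prod.snd_sub]; ring
    have hc1 : a.1 * (x - b₀).1 + a.2 * (x - b₀).2 = 1 := by
      rw [h1, h2]; linear_combination hu₀
    have hcD : x - b₀ ∈ D :=
      Finset.mem_image.mpr ⟨x, hBfin.mem_toFinset.mpr hx, rfl⟩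
    have hcne : x - b₀ ≠ 0 := by
      intro h0
      rw [h0] at hc1
      simp at hc1
    exact ⟨x - b₀, Finset.mem_erase.mpr ⟨hcne, hcD⟩, hc1⟩
  -- the blocking polynomial
  set F : MvPolynomial (Fin 2) (ZMod p) :=
    ∏ c ∈ D', (C c.1 * X 0 + C c.2 * X 1 + C (-1)) with hF
  have hevalF : ∀ w : Fin 2 → ZMod p,
      eval w F = ∏ c ∈ D', (c.1 * w 0 + c.2 * w 1 + (-1)) := by
    intro w; rw [hF, map_prod]; simp
  have h0F : eval (0 : Fin 2 → ZMod p) F ≠ 0 := by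
    rw [hevalF]
    simp only [Pi.zero_apply, mul_zero, zero_add]
    rw [Finset.prod_const]
    exact pow_ne_zero _ (neg_ne_zero.mpr one_ne_zero)
  have hvan : ∀ w : Fin 2 → ZMod p, w ≠ 0 → eval w F = 0 := by
    intro w hw
    have hane : ((w 0, w 1) : ZMod p × ZMod p) ≠ 0 := by
      intro h
      apply hw
      have h1 := congrArg Prod.fst h
      have h2 := congrArg Prod.snd h
      simp at h1 h2
      funext i
      fin_cases i
      · exact h1
      · exact h2
    obtain ⟨c, hc, hc1⟩ := hblock (w 0, w 1) hane
    rw [hevalF]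
    apply Finset.prod_eq_zero hc
    linear_combination hc1
  have hdegF : F.totalDegree ≤ D'.card := by
    rw [hF]
    refine le_trans (totalDegree_finset_prod _ _) ?_
    have hfac : ∀ c ∈ D',
        (C c.1 * X 0 + C c.2 * X 1 + C (-1) :
          MvPolynomial (Fin 2) (ZMod p)).totalDegree ≤ 1 := by
      intro c _
      refine le_trans (totalDegree_add _ _) ?_
      rw [max_le_iff]
      refine ⟨?_, by simp [totalDegree_C]⟩
      refine le_trans (totalDegree_add _ _) ?_
      rw [max_le_iff]
      constructor <;>
      · refine le_trans (totalDegree_mul _ _) ?_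
        simp [totalDegree_C, totalDegree_X]
    calc ∑ c ∈ D',
        (C c.1 * X 0 + C c.2 * X 1 + C (-1) :
          MvPolynomial (Fin 2) (ZMod p)).totalDegree
        ≤ ∑ _c ∈ D', 1 := Finset.sum_le_sum hfac
      _ = D'.card := by simp
  have hkey := jbs_key F h0F hvan
  have hBcard : 1 ≤ Bf.card := Finset.card_pos.mpr ⟨b₀, hb₀f⟩
  have hncard : B.ncard = Bf.card := Set.ncard_eq_toFinset_card B hBfin
  omega
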